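/- Under the conditions A_k = a_k b_k, 0 ≤ A_{k+1} − A_k ≤ a_k, c_k ≥ a_k/2, the iterates of the Symplectic Proximal Point Algorithm satisfy f(x_k) − f* ≤ (A₀/A_k)(f(x₀) − f*) + dist(x₀,Ω)²/(2 A_k) for all k with A_k > 0. -/

import Mathlib

open Set Filter Topology

lemma prox_sg {H : Type*} [NormedAddCommGroup H] [InnerProductSpace ℝ H]
    (f : H → ℝ) (hconv : ConvexOn ℝ Set.univ f) (s : ℝ) (hs : 0 ≤ s)
    (t u : H) (hmin : ∀ v, f u + s * ‖u - t‖^2 ≤ f v + s * ‖v - t‖^2)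
    (y : H) : f u ≤ f y + (2*s) * inner ℝ (u - t) (y - u) := by
  refine le_of_forall_pos_le_add fun ε hε => ?_
  set C : ℝ := s * ‖y - u‖^2 with hC
  have hC0 : 0 ≤ C := mul_nonneg hs (sq_nonneg _)
  set lam : ℝ := min 1 (ε / (C + 1)) with hlam
  have hlam0 : 0 < lam := lt_min one_pos (div_pos hε (by linarith))
  have hlam1 : lam ≤ 1 := min_le_left _ _
  have key : f u + s * ‖u - t‖^2 ≤
      f (u + lam • (y - u)) + s * ‖(u + lam • (y - u)) - t‖^2 := hmin _
  have hcomb : u + lam • (y - u) = (1 - lam) • u + lam • y := by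
    rw [smul_sub, sub_smul, one_smul]; abel
  have hfconv : f (u + lam • (y - u)) ≤ (1 - lam) * f u + lam * f y := by
    rw [hcomb]
    exact hconv.2 (mem_univ u) (mem_univ y) (by linarith) hlam0.le (by ring)
  have hnorm : ‖(u + lam • (y - u)) - t‖^2
      = ‖u - t‖^2 + 2 * lam * inner ℝ (u - t) (y - u) + lam^2 * ‖y - u‖^2 := by
    have h1 : (u + lam • (y - u)) - t = (u - t) + lam • (y - u) := by abel
    rw [h1, norm_add_sq_real, real_inner_smul_right, norm_smul]
    simp [Real.norm_eq_abs, mul_pow, sq_abs]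
    ring
  have h2 : lam * f u ≤ lam * f y + 2 * s * lam * inner ℝ (u - t) (y - u) + s * lam^2 * ‖y - u‖^2 := by
    rw [hnorm] at key; nlinarith [key, hfconv]
  have h3 : f u ≤ f y + 2 * s * inner ℝ (u - t) (y - u) + s * lam * ‖y - u‖^2 := by
    have := mul_le_mul_of_nonneg_left h2 (le_of_lt (inv_pos.2 hlam0))
    have hne : lam ≠ 0 := ne_of_gt hlam0
    field_simp at this
    nlinarith [h2, hlam0, sq_nonneg lam]
  have h4 : s * lam * ‖y - u‖^2 ≤ ε := by
    have hle : lam ≤ ε / (C + 1) := min_le_right _ _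
    have hmc : lam * C ≤ (ε / (C + 1)) * C := mul_le_mul_of_nonneg_right hle hC0
    have h5 : (ε / (C + 1)) * C ≤ ε := by
      rw [div_mul_eq_mul_div, div_le_iff₀ (by linarith)]
      nlinarith
    calc s * lam * ‖y - u‖^2 = lam * C := by rw [hC]; ring
    _ ≤ (ε / (C+1)) * C := hmc
    _ ≤ ε := h5
  linarith

set_option maxHeartbeats 1600000

/-- Convergence rate of the Symplectic Proximal Point Algorithm:
`f(x_k) - f* ≤ (A₀/A_k)(f(x₀) - f*) + dist(x₀,Ω)²/(2 A_k)` whenever `A_k > 0`. -/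
theorem sppa_stmt5
    {H : Type*} [NormedAddCommGroup H] [InnerProductSpace ℝ H] [CompleteSpace H]
    (f : H → ℝ)
    (hconv : ConvexOn ℝ Set.univ f) (hlsc : LowerSemicontinuous f)
    (Ω : Set H) (hΩ : Ω = {y : H | ∀ w, f y ≤ f w}) (hΩne : Ω.Nonempty)
    (xs : H) (hxs : xs ∈ Ω)
    (a b c : ℕ → ℝ)
    (hapos : ∀ k ≥ 1, 0 < a k) (hbpos : ∀ k ≥ 1, 0 < b k) (hcpos : ∀ k ≥ 1, 0 < c k)
    (ha0 : 0 ≤ a 0) (hb0 : 0 ≤ b 0) (hc0 : 0 ≤ c 0)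
    (x xt z : ℕ → H) (hz0 : z 0 = x 0)
    (hxt : ∀ k : ℕ, xt (k+1) = (1 / (b k + 1)) • z k + (b k / (b k + 1)) • x k)
    (hxmin : ∀ k : ℕ, IsMinOn
      (fun y => f y + ((b k + 1) / (2 * c k)) * ‖y - xt (k+1)‖^2)
      Set.univ (x (k+1)))
    (hzk1 : ∀ k : ℕ,
      z (k+1) = z k + ((a k * (b k + 1)) / c k) • (x (k+1) - xt (k+1)))
    (hAmono : ∀ k : ℕ, 0 ≤ a (k+1) * b (k+1) - a k * b k)
    (hAle : ∀ k : ℕ, a (k+1) * b (k+1) - a k * b k ≤ a k)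
    (hca : ∀ k : ℕ, c k ≥ a k / 2) :
    ∀ k : ℕ, 0 < a k * b k →
      f (x k) - f xs ≤
        (a 0 * b 0) / (a k * b k) * (f (x 0) - f xs)
          + (Metric.infDist (x 0) Ω)^2 / (2 * (a k * b k)) := by
  -- basic sign facts
  have han : ∀ k, 0 ≤ a k := by
    intro k; cases k with
    | zero => exact ha0
    | succ n => exact (hapos (n+1) (Nat.succ_le_succ (Nat.zero_le n))).le
  have hbn : ∀ k, 0 ≤ b k := by
    intro k; cases k with
    | zero => exact hb0
    | succ n => exact (hbpos (n+1) (Nat.succ_le_succ (Nat.zero_le n))).le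
  have hcall : ∀ k, 0 < c k := by
    intro k; cases k with
    | succ n => exact hcpos (n+1) (Nat.succ_le_succ (Nat.zero_le n))
    | zero =>
      by_contra h
      push_neg at h
      have hc00 : c 0 = 0 := le_antisymm h hc0
      have ha00 : a 0 = 0 := by
        have := hca 0; rw [hc00] at this
        linarith [ha0]
      have h1 : a 1 * b 1 ≤ a 0 * b 0 + a 0 := by linarith [hAle 0]
      have h2 : 0 < a 1 * b 1 :=
        mul_pos (hapos 1 le_rfl) (hbpos 1 le_rfl)
      rw [ha00] at h1
      simp at h1
      linarith
  have hfmin : ∀ v, f xs ≤ f v := by rw [hΩ] at hxs; exact hxs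
  -- Ω is closed and convex; projection of x 0 exists
  have hΩeq : Ω = {y | y ∈ Set.univ ∧ f y ≤ f xs} := by
    rw [hΩ]; ext y
    constructor
    · intro hy; exact ⟨trivial, hy xs⟩
    · intro ⟨_, hy⟩ v; exact le_trans hy (hfmin v)
  have hΩconv : Convex ℝ Ω := by rw [hΩeq]; exact hconv.convex_le (f xs)
  have hΩclosed : IsClosed Ω := by
    have h := hlsc.isClosed_preimage (f xs)
    have : Ω = f ⁻¹' Set.Iic (f xs) := by
      rw [hΩeq]; ext y; simp [Set.mem_preimage]
    rw [this]; exact h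
  obtain ⟨w, hwΩ, hwn⟩ :=
    exists_norm_eq_iInf_of_complete_convex hΩne hΩclosed.isComplete hΩconv (x 0)
  have hd : ‖x 0 - w‖ = Metric.infDist (x 0) Ω := by
    rw [Metric.infDist_eq_iInf, hwn]
    congr 1; ext y; rw [dist_eq_norm]
  have hfw : f w = f xs := by
    rw [hΩ] at hwΩ
    exact le_antisymm (hwΩ xs) (hfmin w)
  -- subgradient inequality from the prox step
  have hsg : ∀ k (y : H), f (x (k+1)) ≤ f y +
      ((b k + 1) / c k) * inner ℝ (x (k+1) - xt (k+1)) (y - x (k+1)) := by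
    intro k y
    have hmin' : ∀ v, f (x (k+1)) + ((b k + 1) / (2 * c k)) * ‖x (k+1) - xt (k+1)‖^2
        ≤ f v + ((b k + 1) / (2 * c k)) * ‖v - xt (k+1)‖^2 := fun v =>
      isMinOn_iff.1 (hxmin k) v (mem_univ v)
    have hs : (0:ℝ) ≤ (b k + 1) / (2 * c k) :=
      div_nonneg (by linarith [hbn k]) (by linarith [hcall k])
    have := prox_sg f hconv _ hs (xt (k+1)) (x (k+1)) hmin' y
    have heq : 2 * ((b k + 1) / (2 * c k)) = (b k + 1) / c k := by
      rw [mul_div_assoc']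
      rw [show 2 * (b k + 1) = (b k + 1) * 2 by ring, mul_comm 2 (c k),
        mul_div_mul_right _ _ (two_ne_zero)]
    rw [heq] at this
    exact this
  -- nonnegativity of the gaps
  have hgap : ∀ k, 0 ≤ f (x k) - f xs := fun k => by linarith [hfmin (x k)]
  -- one-step decrease of the Lyapunov function
  have hE : ∀ k,
      a (k+1) * b (k+1) * (f (x (k+1)) - f xs) + ‖z (k+1) - w‖^2 / 2
        ≤ a k * b k * (f (x k) - f xs) + ‖z k - w‖^2 / 2 := by
    intro k
    have hck := hcall k
    have hb1 : b k + 1 ≠ 0 := by linarith [hbn k]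
    set s2 : ℝ := (b k + 1) / c k with hs2def
    have hs2pos : 0 < s2 := div_pos (by linarith [hbn k]) hck
    set u : H := x (k+1) with hu
    set t : H := xt (k+1) with ht
    set g : H := s2 • (t - u) with hg
    -- z k in terms of t and x k
    have hz_eq : z k = (b k + 1) • t - b k • x k := by
      have h1 : (b k + 1) • t = z k + b k • x k := by
        rw [ht, hxt k, smul_add, smul_smul, smul_smul]
        have e1 : (b k + 1) * (1 / (b k + 1)) = 1 := by field_simp
        have e2 : (b k + 1) * (b k / (b k + 1)) = b k := by field_simp
        rw [e1, e2, one_smul]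
      rw [h1]; abel
    -- update of z
    have hz1 : z (k+1) - w = (z k - w) - a k • g := by
      have hsc : (a k * (b k + 1)) / c k = a k * s2 := by
        rw [hs2def, mul_div_assoc]
      rw [hzk1 k, hsc, hg, ← hu, ← ht]
      module
    -- norm expansion
    have hnexp : ‖z (k+1) - w‖^2 = ‖z k - w‖^2
        - 2 * a k * inner ℝ g (z k - w) + (a k)^2 * ‖g‖^2 := by
      rw [hz1, norm_sub_sq_real, real_inner_smul_right, real_inner_comm, norm_smul]
      simp [mul_pow, sq_abs]
      ring
    -- splitting the inner product
    have hzsplit : z k - w = (u - w) + (b k + 1) • (t - u) + b k • (u - x k) := by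
      rw [hz_eq]; module
    have hsplit : inner ℝ g (z k - w)
        = inner ℝ g (u - w) + (b k + 1) * inner ℝ g (t - u)
          + b k * inner ℝ g (u - x k) := by
      rw [hzsplit, inner_add_right, inner_add_right,
        real_inner_smul_right, real_inner_smul_right]
    have h_gu : (inner ℝ g (t - u) : ℝ) = s2 * ‖t - u‖^2 := by
      rw [hg, real_inner_smul_left, real_inner_self_eq_norm_sq]
    have h_g1 : (inner ℝ g (u - w) : ℝ) = s2 * inner ℝ (u - t) (w - u) := by
      rw [hg, real_inner_smul_left]
      congr 1
      rw [show t - u = -(u - t) by abel, show u - w = -(w - u) by abel,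
        inner_neg_neg]
    have h_g2 : (inner ℝ g (u - x k) : ℝ) = s2 * inner ℝ (u - t) (x k - u) := by
      rw [hg, real_inner_smul_left]
      congr 1
      rw [show t - u = -(u - t) by abel, show u - x k = -(x k - u) by abel,
        inner_neg_neg]
    have hgn : ‖g‖^2 = s2^2 * ‖t - u‖^2 := by
      rw [hg, norm_smul]
      simp [mul_pow, sq_abs]
    -- subgradient inequalities
    have hsg1 : f u ≤ f xs + s2 * inner ℝ (u - t) (w - u) := by
      have := hsg k w; rw [hfw] at this
      rw [hu, ht]; exact this
    have hsg2 : f u ≤ f (x k) + s2 * inner ℝ (u - t) (x k - u) := by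
      have := hsg k (x k)
      rw [hu, ht]; exact this
    -- key lower bound on inner ℝ g (z k - w)
    have hgamma : (b k + 1) * (s2 * ‖t - u‖^2) = c k * ‖g‖^2 := by
      rw [hgn, hs2def]
      field_simp
    have hone : (f u - f xs) + c k * ‖g‖^2 + b k * (f u - f (x k))
        ≤ inner ℝ g (z k - w) := by
      rw [hsplit, h_g1, h_g2, h_gu]
      have t3 : b k * (f u - f (x k)) ≤ b k * (s2 * inner ℝ (u - t) (x k - u)) :=
        mul_le_mul_of_nonneg_left (by linarith) (hbn k)
      nlinarith [hgamma]
    have t4 : a k * ((f u - f xs) + c k * ‖g‖^2 + b k * (f u - f (x k)))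
        ≤ a k * inner ℝ g (z k - w) :=
      mul_le_mul_of_nonneg_left hone (han k)
    -- combine everything
    have hAle' := hAle k
    have hgap' : 0 ≤ f u - f xs := by rw [hu]; exact hgap (k+1)
    have hg2 : (0:ℝ) ≤ ‖g‖^2 := sq_nonneg _
    have hq : (a k)^2 / 2 ≤ a k * c k := by
      have h1 : a k * (a k / 2) ≤ a k * c k :=
        mul_le_mul_of_nonneg_left (hca k) (han k)
      nlinarith [h1]
    have key1 : (a (k+1) * b (k+1) - a k - a k * b k) * (f u - f xs) ≤ 0 :=
      mul_nonpos_of_nonpos_of_nonneg (by linarith) hgap'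
    have key2 : ((a k)^2 / 2 - a k * c k) * ‖g‖^2 ≤ 0 :=
      mul_nonpos_of_nonpos_of_nonneg (by linarith) hg2
    rw [hnexp]
    linarith [t4, key1, key2]
  -- Lyapunov is nonincreasing, so bounded by its initial value
  have hEmono : ∀ k,
      a k * b k * (f (x k) - f xs) + ‖z k - w‖^2 / 2
        ≤ a 0 * b 0 * (f (x 0) - f xs) + ‖z 0 - w‖^2 / 2 := by
    intro k
    induction k with
    | zero => exact le_rfl
    | succ n ih => exact le_trans (hE n) ih
  -- conclude
  intro k hk
  rw [← hd]
  have hEk := hEmono k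
  rw [hz0] at hEk
  have hbound : a k * b k * (f (x k) - f xs)
      ≤ a 0 * b 0 * (f (x 0) - f xs) + ‖x 0 - w‖^2 / 2 := by
    nlinarith [sq_nonneg ‖z k - w‖]
  have goal' : f (x k) - f xs
      ≤ (a 0 * b 0 * (f (x 0) - f xs) + ‖x 0 - w‖^2 / 2) / (a k * b k) := by
    rw [le_div_iff₀ hk]
    linarith [hbound]
  have heq : (a 0 * b 0 * (f (x 0) - f xs) + ‖x 0 - w‖^2 / 2) / (a k * b k)
      = a 0 * b 0 / (a k * b k) * (f (x 0) - f xs)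
        + ‖x 0 - w‖^2 / (2 * (a k * b k)) := by
    field_simp
  rw [heq] at goal'
  exact goal'
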